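/- Let φ : Σ_A → ℝ be Hölder. Then there exist Hölder functions u, φ⁺ : Σ_A → ℝ such that φ⁺ = φ + u∘σ − u, and φ⁺ depends only on the forward coordinates: φ⁺(x) = φ⁺(y) whenever x i = y i for all i ≥ 0. -/

import Mathlib

open Real

variable {r : ℕ}

/-- The two-sided subshift of finite type determined by the transition
matrix `A`. -/
abbrev TwoSided (A : Fin r → Fin r → Prop) : Type :=
  {x : ℤ → Fin r // ∀ i, A (x i) (x (i + 1))}

/-- The shift homeomorphism `σ` on the two-sided subshift. -/
def shift2 {A : Fin r → Fin r → Prop} (x : TwoSided A) : TwoSided A :=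
  ⟨fun i => x.1 (i + 1), fun i => x.2 (i + 1)⟩

/-- The metric `d(x,y) = ∑_{i ∈ ℤ, x i ≠ y i} 2^{-|i|}` on the two-sided
subshift. -/
noncomputable def dist2 {A : Fin r → Fin r → Prop} (x y : TwoSided A) : ℝ :=
  ∑' i : ℤ, if x.1 i ≠ y.1 i then (2 : ℝ) ^ (-|i|) else 0

/-- `ψ` is Hölder with respect to the distance function `d`. -/
def IsHolderWrt {X : Type*} (d : X → X → ℝ) (ψ : X → ℝ) : Prop :=
  ∃ C > 0, ∃ α ∈ Set.Ioc (0 : ℝ) 1, ∀ x y, |ψ x - ψ y| ≤ C * d x y ^ α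

namespace SinaiAux

variable {A : Fin r → Fin r → Prop}

noncomputable def wt (i : ℤ) : ℝ := (2 : ℝ) ^ (-|i|)

lemma wt_pos (i : ℤ) : 0 < wt i := zpow_pos (by norm_num) _

lemma wt_eq (i : ℤ) : wt i = (1 / 2 : ℝ) ^ i.natAbs := by
  have h : (|i| : ℤ) = (i.natAbs : ℤ) := Int.abs_eq_natAbs i
  rw [wt, h, zpow_neg, zpow_natCast, ← inv_pow]
  norm_num

lemma summable_wt : Summable wt := by
  have h : Summable (fun n : ℕ => ((1 / 2 : ℝ)) ^ n) :=
    summable_geometric_of_lt_one (by norm_num) (by norm_num)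
  refine Summable.of_nat_of_neg (h.congr fun n => ?_) (h.congr fun n => ?_)
  · rw [wt_eq]; simp
  · rw [wt_eq]; simp

noncomputable def tw (x y : TwoSided A) (i : ℤ) : ℝ :=
  if x.1 i ≠ y.1 i then wt i else 0

lemma tw_nonneg (x y : TwoSided A) (i : ℤ) : 0 ≤ tw x y i := by
  unfold tw; split
  · exact (wt_pos i).le
  · exact le_rfl

lemma tw_le_wt (x y : TwoSided A) (i : ℤ) : tw x y i ≤ wt i := by
  unfold tw; split
  · exact le_rfl
  · exact (wt_pos i).le

lemma summable_tw (x y : TwoSided A) : Summable (tw x y) :=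
  Summable.of_nonneg_of_le (tw_nonneg x y) (tw_le_wt x y) summable_wt

lemma dist2_eq (x y : TwoSided A) : dist2 x y = ∑' i, tw x y i := rfl

lemma dist2_nonneg (x y : TwoSided A) : 0 ≤ dist2 x y :=
  tsum_nonneg (tw_nonneg x y)

lemma wt_le_dist2 {x y : TwoSided A} {i : ℤ} (h : x.1 i ≠ y.1 i) :
    wt i ≤ dist2 x y := by
  have := Summable.le_tsum (summable_tw x y) i (fun j _ => tw_nonneg x y j)
  rw [dist2_eq]
  calc wt i = tw x y i := by rw [tw, if_pos h]
    _ ≤ _ := this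

lemma one_le_dist2_of_ne_zero {x y : TwoSided A} (h : x.1 0 ≠ y.1 0) :
    1 ≤ dist2 x y := by
  have := wt_le_dist2 h
  rwa [wt_eq] at this

/-- The tail bound for the natural-number part of the weight series. -/
lemma nat_tail_le (N : ℕ) (g : ℕ → ℝ)
    (hg : ∀ n, 0 ≤ g n ∧ g n ≤ (if N ≤ n then (1 / 2 : ℝ) ^ n else 0)) :
    Summable g ∧ ∑' n, g n ≤ 2 * (1 / 2 : ℝ) ^ N := by
  have hgeo : Summable (fun n : ℕ => ((1 / 2 : ℝ)) ^ n) :=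
    summable_geometric_of_lt_one (by norm_num) (by norm_num)
  set G : ℕ → ℝ := fun n => if N ≤ n then (1 / 2 : ℝ) ^ n else 0 with hG
  have hGle : ∀ n, G n ≤ (1 / 2 : ℝ) ^ n := by
    intro n; simp only [hG]; split
    · exact le_rfl
    · positivity
  have hG0 : ∀ n, 0 ≤ G n := by
    intro n; simp only [hG]; split <;> positivity
  have hGsum : Summable G := Summable.of_nonneg_of_le hG0 hGle hgeo
  have hgsum : Summable g :=
    Summable.of_nonneg_of_le (fun n => (hg n).1) (fun n => (hg n).2) hGsum
  refine ⟨hgsum, le_trans (Summable.tsum_le_tsum (fun n => (hg n).2) hgsum hGsum) ?_⟩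
  rw [← Summable.sum_add_tsum_nat_add N hGsum]
  have h1 : ∑ i ∈ Finset.range N, G i = 0 := by
    apply Finset.sum_eq_zero
    intro i hi
    simp only [hG]
    rw [if_neg (by simpa using Finset.mem_range.mp hi)]
  have h2 : ∀ n : ℕ, G (n + N) = (1 / 2 : ℝ) ^ N * (1 / 2 : ℝ) ^ n := by
    intro n; simp only [hG]
    rw [if_pos (by omega), pow_add, mul_comm]
  rw [h1, zero_add]
  calc ∑' n, G (n + N) = ∑' n : ℕ, (1 / 2 : ℝ) ^ N * (1 / 2 : ℝ) ^ n := by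
        exact tsum_congr h2
    _ = (1 / 2 : ℝ) ^ N * (1 - 1 / 2)⁻¹ := by
        rw [tsum_mul_left, tsum_geometric_of_lt_one (by norm_num) (by norm_num)]
    _ ≤ 2 * (1 / 2 : ℝ) ^ N := by norm_num [mul_comm]

lemma tsum_tail_le (N : ℕ) (f : ℤ → ℝ)
    (hf : ∀ i, 0 ≤ f i ∧ f i ≤ (if (N : ℤ) ≤ |i| then wt i else 0)) :
    Summable f ∧ ∑' i, f i ≤ 4 * (1 / 2 : ℝ) ^ N := by
  have key : ∀ i, (if (N : ℤ) ≤ |i| then wt i else 0)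
      = (if N ≤ i.natAbs then (1 / 2 : ℝ) ^ i.natAbs else 0) := by
    intro i
    rw [wt_eq]
    have h : ((N : ℤ) ≤ |i|) ↔ (N ≤ i.natAbs) := by
      rw [Int.abs_eq_natAbs, Int.ofNat_le]
    by_cases hc : (N : ℤ) ≤ |i|
    · rw [if_pos hc, if_pos (h.mp hc)]
    · rw [if_neg hc, if_neg (fun hcc => hc (h.mpr hcc))]
  have h1 := nat_tail_le N (fun n => f n) (fun n => by have := hf (n : ℤ); rw [key] at this; simpa using this)
  have h2 := nat_tail_le N (fun n => f (-n)) (fun n => by have := hf (-(n : ℤ)); rw [key] at this; simpa using this)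
  have hsum : Summable f := Summable.of_nat_of_neg h1.1 h2.1
  refine ⟨hsum, ?_⟩
  rw [Summable.tsum_of_nat_of_neg h1.1 h2.1]
  have h0 : 0 ≤ f 0 := (hf 0).1
  have := h1.2; have := h2.2
  linarith
lemma dist2_le_of_far (x y : TwoSided A) (N : ℕ)
    (h : ∀ i, x.1 i ≠ y.1 i → (N : ℤ) ≤ |i|) :
    dist2 x y ≤ 4 * (1 / 2 : ℝ) ^ N := by
  refine (tsum_tail_le N (tw x y) fun i => ⟨tw_nonneg x y i, ?_⟩).2
  unfold tw; split
  · rw [if_pos (h i ‹_›)]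
  · split
    · exact (wt_pos i).le
    · exact le_rfl

lemma dist2_le_four (x y : TwoSided A) : dist2 x y ≤ 4 := by
  simpa using dist2_le_of_far x y 0 (fun i _ => by positivity)

lemma shift2_iter (n : ℕ) (x : TwoSided A) (i : ℤ) :
    (shift2^[n] x).1 i = x.1 (i + n) := by
  induction n generalizing x i with
  | zero => simp
  | succ n ih =>
    rw [Function.iterate_succ_apply, ih]
    show x.1 (i + n + 1) = x.1 (i + (n + 1 : ℕ))
    norm_num
    ring_nf

lemma dist2_iter_le (n : ℕ) (x y : TwoSided A) :
    dist2 (shift2^[n] x) (shift2^[n] y) ≤ 2 ^ n * dist2 x y := by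
  have hpt : ∀ j : ℤ, tw (shift2^[n] x) (shift2^[n] y) (j - (n : ℤ)) ≤ 2 ^ n * tw x y j := by
    intro j
    have hcx : (shift2^[n] x).1 (j - n) = x.1 j := by rw [shift2_iter]; ring_nf
    have hcy : (shift2^[n] y).1 (j - n) = y.1 j := by rw [shift2_iter]; ring_nf
    have hwt : wt (j - n) ≤ 2 ^ n * wt j := by
      unfold wt
      rw [← zpow_natCast (2 : ℝ) n, ← zpow_add₀ (by norm_num : (2:ℝ) ≠ 0)]
      apply zpow_le_zpow_right₀ (by norm_num)
      have h1 := abs_sub_abs_le_abs_sub j (j - n)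
      rw [show j - (j - (n : ℤ)) = (n : ℤ) by ring, Int.abs_natCast] at h1
      omega
    unfold tw
    rw [hcx, hcy]
    split
    · exact hwt
    · simp
  have hsumL : Summable (fun j : ℤ => tw (shift2^[n] x) (shift2^[n] y) (j - (n : ℤ))) :=
    Summable.of_nonneg_of_le (fun j => tw_nonneg _ _ _) hpt ((summable_tw x y).mul_left _)
  have he : ∑' (j : ℤ), tw (shift2^[n] x) (shift2^[n] y) (j - (n : ℤ))
      = ∑' i, tw (shift2^[n] x) (shift2^[n] y) i :=
    Equiv.tsum_eq (Equiv.subRight (n : ℤ)) (tw (shift2^[n] x) (shift2^[n] y))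
  calc dist2 (shift2^[n] x) (shift2^[n] y)
      = ∑' (j : ℤ), tw (shift2^[n] x) (shift2^[n] y) (j - (n : ℤ)) := he.symm
    _ ≤ ∑' j, 2 ^ n * tw x y j := Summable.tsum_le_tsum hpt hsumL ((summable_tw x y).mul_left _)
    _ = 2 ^ n * dist2 x y := tsum_mul_left

lemma dist2_shift_le (x y : TwoSided A) :
    dist2 (shift2 x) (shift2 y) ≤ 2 * dist2 x y := by
  simpa using dist2_iter_le 1 x y
/-- A point of the subshift whose zeroth coordinate is `a`, chosen canonically
from a proof that one exists. -/
noncomputable def past (a : Fin r) (h : ∃ z : TwoSided A, z.1 0 = a) : TwoSided A :=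
  h.choose

lemma past_spec (a : Fin r) (h : ∃ z : TwoSided A, z.1 0 = a) : (past a h).1 0 = a :=
  h.choose_spec

lemma past_congr {a b : Fin r} (h : ∃ z : TwoSided A, z.1 0 = a)
    (h' : ∃ z : TwoSided A, z.1 0 = b) (hab : a = b) : past a h = past b h' := by
  subst hab; rfl

/-- Replace the past of `x` by a canonically chosen past depending only on `x 0`. -/
noncomputable def star (x : TwoSided A) : TwoSided A :=
  ⟨fun i => if 0 ≤ i then x.1 i else (past (x.1 0) ⟨x, rfl⟩).1 i, by
    intro i
    rcases lt_trichotomy i (-1) with h | h | h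
    · have h1 : ¬ (0 ≤ i) := by omega
      have h2 : ¬ (0 ≤ i + 1) := by omega
      simpa [h1, h2] using (past (x.1 0) ⟨x, rfl⟩).2 i
    · subst h
      have h1 : ¬ (0 ≤ (-1 : ℤ)) := by norm_num
      have h2 : (0 : ℤ) ≤ -1 + 1 := by norm_num
      simp only [if_neg h1, if_pos h2]
      have := (past (x.1 0) ⟨x, rfl⟩).2 (-1)
      rw [show (-1 : ℤ) + 1 = 0 by ring, past_spec] at this
      rw [show (-1 : ℤ) + 1 = 0 by ring]
      exact this
    · have h1 : (0 : ℤ) ≤ i := by omega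
      have h2 : (0 : ℤ) ≤ i + 1 := by omega
      simpa [h1, h2] using x.2 i⟩

lemma star_apply_of_nonneg (x : TwoSided A) {i : ℤ} (h : 0 ≤ i) :
    (star x).1 i = x.1 i := if_pos h

lemma star_apply_of_neg (x : TwoSided A) {i : ℤ} (h : ¬ 0 ≤ i) :
    (star x).1 i = (past (x.1 0) ⟨x, rfl⟩).1 i := if_neg h

lemma star_eq_of_forward {x y : TwoSided A} (h : ∀ i, 0 ≤ i → x.1 i = y.1 i) :
    star x = star y := by
  apply Subtype.ext; funext i
  show (star x).1 i = (star y).1 i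
  by_cases hi : 0 ≤ i
  · rw [star_apply_of_nonneg x hi, star_apply_of_nonneg y hi]
    exact h i hi
  · rw [star_apply_of_neg x hi, star_apply_of_neg y hi,
      past_congr ⟨x, rfl⟩ ⟨y, rfl⟩ (h 0 le_rfl)]

lemma forward_star (x : TwoSided A) : ∀ i, 0 ≤ i → x.1 i = (star x).1 i :=
  fun i hi => (star_apply_of_nonneg x hi).symm

lemma tw_star_le {x y : TwoSided A} (h0 : x.1 0 = y.1 0) (i : ℤ) :
    tw (star x) (star y) i ≤ tw x y i := by
  by_cases hi : 0 ≤ i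
  · unfold tw
    rw [star_apply_of_nonneg x hi, star_apply_of_nonneg y hi]
  · have : (star x).1 i = (star y).1 i := by
      rw [star_apply_of_neg x hi, star_apply_of_neg y hi,
        past_congr ⟨x, rfl⟩ ⟨y, rfl⟩ h0]
    unfold tw
    rw [if_neg (by simpa using this)]
    exact tw_nonneg x y i

lemma dist2_star_le (x y : TwoSided A) :
    dist2 (star x) (star y) ≤ 4 * dist2 x y := by
  by_cases h0 : x.1 0 = y.1 0
  · have := Summable.tsum_le_tsum (tw_star_le h0) (summable_tw _ _) (summable_tw x y)
    rw [← dist2_eq, ← dist2_eq] at this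
    nlinarith [dist2_nonneg x y]
  · have h1 := one_le_dist2_of_ne_zero h0
    have h2 := dist2_le_four (star x) (star y)
    nlinarith
lemma dist2_iter_forward {x y : TwoSided A} (h : ∀ i, 0 ≤ i → x.1 i = y.1 i) (n : ℕ) :
    dist2 (shift2^[n] x) (shift2^[n] y) ≤ 4 * (1 / 2 : ℝ) ^ n := by
  apply dist2_le_of_far
  intro i hne
  rw [shift2_iter, shift2_iter] at hne
  have h1 : ¬ (0 ≤ i + n) := fun hc => hne (h _ hc)
  have h2 : i < 0 := by omega
  rw [abs_of_neg h2]
  omega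

lemma pow_rpow_comm {b : ℝ} (hb : 0 ≤ b) (α : ℝ) (n : ℕ) :
    ((b ^ n) : ℝ) ^ α = (b ^ α) ^ n := by
  rw [← Real.rpow_natCast b n, ← Real.rpow_natCast (b ^ α) n,
    ← Real.rpow_mul hb, ← Real.rpow_mul hb, mul_comm]

section Holder

variable (φ : TwoSided A → ℝ) {C α : ℝ}

/-- The summands of the transfer function. -/
noncomputable def FF (x : TwoSided A) (n : ℕ) : ℝ :=
  φ (shift2^[n] x) - φ (shift2^[n] (star x))

/-- The transfer function `u`. -/
noncomputable def uu (x : TwoSided A) : ℝ := ∑' n, FF φ x n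

variable (hC : 0 < C) (hα1 : 0 < α) (hα2 : α ≤ 1)
  (hH : ∀ x y : TwoSided A, |φ x - φ y| ≤ C * dist2 x y ^ α)

include hC hα1 hα2 hH in
lemma holder_forward_bound {x y : TwoSided A} (h : ∀ i, 0 ≤ i → x.1 i = y.1 i) (n : ℕ) :
    |φ (shift2^[n] x) - φ (shift2^[n] y)| ≤ (4 * C) * ((1 / 2 : ℝ) ^ α) ^ n := by
  have hd0 := dist2_nonneg (shift2^[n] x) (shift2^[n] y)
  have h1 : dist2 (shift2^[n] x) (shift2^[n] y) ^ α ≤ (4 * (1 / 2 : ℝ) ^ n) ^ α :=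
    Real.rpow_le_rpow hd0 (dist2_iter_forward h n) hα1.le
  have h2 : ((4 : ℝ) * (1 / 2 : ℝ) ^ n) ^ α = (4 : ℝ) ^ α * ((1 / 2 : ℝ) ^ α) ^ n := by
    rw [Real.mul_rpow (by norm_num) (by positivity), pow_rpow_comm (by norm_num)]
  have h3 : (4 : ℝ) ^ α ≤ 4 := by
    have := Real.rpow_le_rpow_of_exponent_le (by norm_num : (1:ℝ) ≤ 4) hα2
    rwa [Real.rpow_one] at this
  have h4 : (0 : ℝ) ≤ ((1 / 2 : ℝ) ^ α) ^ n := by positivity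
  calc |φ (shift2^[n] x) - φ (shift2^[n] y)|
      ≤ C * dist2 (shift2^[n] x) (shift2^[n] y) ^ α := hH _ _
    _ ≤ C * ((4 : ℝ) ^ α * ((1 / 2 : ℝ) ^ α) ^ n) := by
        rw [← h2]; exact mul_le_mul_of_nonneg_left h1 hC.le
    _ ≤ (4 * C) * ((1 / 2 : ℝ) ^ α) ^ n := by
        nlinarith [mul_le_mul_of_nonneg_left (mul_le_mul_of_nonneg_right h3 h4) hC.le]

include hC hα1 hα2 hH in
lemma FF_bound (x : TwoSided A) (n : ℕ) :
    |FF φ x n| ≤ (4 * C) * ((1 / 2 : ℝ) ^ α) ^ n :=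
  holder_forward_bound φ hC hα1 hα2 hH (forward_star x) n

include hα1 in
lemma theta_lt_one : (1 / 2 : ℝ) ^ α < 1 :=
  Real.rpow_lt_one (by norm_num) (by norm_num) hα1

lemma theta_pos : (0:ℝ) < (1 / 2 : ℝ) ^ α :=
  Real.rpow_pos_of_pos (by norm_num) α

include hC hα1 hα2 hH in
lemma FF_summable (x : TwoSided A) : Summable (FF φ x) := by
  apply Summable.of_norm_bounded ((summable_geometric_of_lt_one (theta_pos).le
    (theta_lt_one hα1)).mul_left (4 * C))
  intro n
  exact FF_bound φ hC hα1 hα2 hH x n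

include hC hα1 hα2 hH in
lemma uu_bound (x : TwoSided A) :
    |uu φ x| ≤ (4 * C) * (1 - (1 / 2 : ℝ) ^ α)⁻¹ := by
  have hsum : Summable fun n => ‖FF φ x n‖ := by
    apply Summable.of_nonneg_of_le (fun n => norm_nonneg _)
      (fun n => FF_bound φ hC hα1 hα2 hH x n)
    exact (summable_geometric_of_lt_one (theta_pos).le (theta_lt_one hα1)).mul_left (4 * C)
  calc |uu φ x| ≤ ∑' n, ‖FF φ x n‖ := norm_tsum_le_tsum_norm hsum
    _ ≤ ∑' n, (4 * C) * ((1 / 2 : ℝ) ^ α) ^ n := by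
        apply Summable.tsum_le_tsum (fun n => FF_bound φ hC hα1 hα2 hH x n) hsum
        exact (summable_geometric_of_lt_one (theta_pos).le (theta_lt_one hα1)).mul_left (4 * C)
    _ = (4 * C) * (1 - (1 / 2 : ℝ) ^ α)⁻¹ := by
        rw [tsum_mul_left, tsum_geometric_of_lt_one (theta_pos).le (theta_lt_one hα1)]

end Holder
lemma dist2_self (x : TwoSided A) : dist2 x x = 0 := by
  rw [dist2_eq]
  convert tsum_zero with i
  simp [tw]

lemma eq_of_dist2_eq_zero {x y : TwoSided A} (h : dist2 x y = 0) : x = y := by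
  by_contra hne
  have hex : ∃ i, x.1 i ≠ y.1 i := by
    by_contra hc
    push_neg at hc
    exact hne (Subtype.ext (funext hc))
  obtain ⟨i, hi⟩ := hex
  have := wt_le_dist2 hi
  have := wt_pos i
  linarith

lemma exists_M {t : ℝ} (ht : 0 < t) (ht1 : t ≤ 1) :
    ∃ M : ℕ, (1 / 2 : ℝ) ^ M ≤ 2 * t ∧ t ≤ (1 / 2 : ℝ) ^ M := by
  classical
  have hex : ∃ n : ℕ, (1 / 2 : ℝ) ^ n < 2 * t :=
    exists_pow_lt_of_lt_one (by linarith) (by norm_num)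
  refine ⟨Nat.find hex, (Nat.find_spec hex).le, ?_⟩
  rcases Nat.eq_zero_or_pos (Nat.find hex) with h | h
  · rw [h]; simpa using ht1
  · have hmin := Nat.find_min hex (show Nat.find hex - 1 < Nat.find hex by omega)
    push_neg at hmin
    have heq : ((1 / 2 : ℝ)) ^ (Nat.find hex) = (1 / 2) ^ (Nat.find hex - 1) * (1 / 2) := by
      rw [← pow_succ]; congr 1; omega
    rw [heq]; linarith
section Holder2

variable (φ : TwoSided A → ℝ) {C α : ℝ}
variable (hC : 0 < C) (hα1 : 0 < α) (hα2 : α ≤ 1)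
  (hH : ∀ x y : TwoSided A, |φ x - φ y| ≤ C * dist2 x y ^ α)

/-- The Hölder constant for the transfer function `u`. -/
noncomputable def Ku (C α : ℝ) : ℝ :=
  8 * C * ((2 : ℝ) ^ α - 1)⁻¹ + 16 * C * (1 - (1 / 2 : ℝ) ^ α)⁻¹
    + 8 * C * (1 - (1 / 2 : ℝ) ^ α)⁻¹

include hC hα1 in
lemma Ku_pos : 0 < Ku C α := by
  have h1 : 1 < (2 : ℝ) ^ α :=
    (Real.one_lt_rpow_iff_of_pos (by norm_num)).mpr (Or.inl ⟨by norm_num, hα1⟩)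
  have h2 : (1 / 2 : ℝ) ^ α < 1 := theta_lt_one hα1
  unfold Ku
  have i1 : 0 < ((2:ℝ) ^ α - 1)⁻¹ := inv_pos.mpr (by linarith)
  have i2 : 0 < (1 - (1 / 2 : ℝ) ^ α)⁻¹ := inv_pos.mpr (by linarith)
  positivity

include hC hα1 hα2 hH in
lemma uu_holder (x y : TwoSided A) :
    |uu φ x - uu φ y| ≤ Ku C α * dist2 x y ^ (α / 2) := by
  set θ : ℝ := (1 / 2 : ℝ) ^ α with hθdef
  set ρ : ℝ := (2 : ℝ) ^ α with hρdef
  have hθ0 : 0 < θ := theta_pos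
  have hθ1 : θ < 1 := theta_lt_one hα1
  have hρ : 1 < ρ :=
    (Real.one_lt_rpow_iff_of_pos (by norm_num)).mpr (Or.inl ⟨by norm_num, hα1⟩)
  have hρθ : ρ * θ = 1 := by
    rw [hρdef, hθdef, ← Real.mul_rpow (by norm_num) (by norm_num)]
    norm_num
  have hC8 : (0:ℝ) ≤ 8 * C := by linarith
  have hρ1 : (0:ℝ) < (ρ - 1)⁻¹ := inv_pos.mpr (sub_pos.mpr hρ)
  have hθ1' : (0:ℝ) < (1 - θ)⁻¹ := inv_pos.mpr (sub_pos.mpr hθ1)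
  have hd0 : 0 ≤ dist2 x y := dist2_nonneg x y
  rcases eq_or_lt_of_le hd0 with hd | hd
  · -- distance zero : x = y
    have hxy : x = y := eq_of_dist2_eq_zero hd.symm
    subst hxy
    simp [dist2_self, Real.zero_rpow (by positivity : α / 2 ≠ 0)]
  · -- distance positive
    set d : ℝ := dist2 x y with hddef
    have hKgeom : Summable (fun n : ℕ => (8 * C) * θ ^ n) :=
      (summable_geometric_of_lt_one hθ0.le hθ1).mul_left _
    have hg1 : ∀ n, |FF φ x n - FF φ y n| ≤ (8 * C) * θ ^ n := by
      intro n
      have b1 := FF_bound φ hC hα1 hα2 hH x n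
      have b2 := FF_bound φ hC hα1 hα2 hH y n
      rw [← hθdef] at b1 b2
      calc |FF φ x n - FF φ y n| ≤ |FF φ x n| + |FF φ y n| := abs_sub _ _
        _ ≤ (8 * C) * θ ^ n := by linarith
    have hg2 : ∀ n, |FF φ x n - FF φ y n| ≤ (8 * C) * ρ ^ n * d ^ α := by
      intro n
      have hrw : FF φ x n - FF φ y n =
          (φ (shift2^[n] x) - φ (shift2^[n] y))
            - (φ (shift2^[n] (star x)) - φ (shift2^[n] (star y))) := by
        unfold FF; ring
      have e1 : |φ (shift2^[n] x) - φ (shift2^[n] y)| ≤ C * ρ ^ n * d ^ α := by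
        have hb := dist2_iter_le n x y
        have h1 : dist2 (shift2^[n] x) (shift2^[n] y) ^ α ≤ ((2:ℝ) ^ n * d) ^ α :=
          Real.rpow_le_rpow (dist2_nonneg _ _) hb hα1.le
        have h2 : ((2:ℝ) ^ n * d) ^ α = ρ ^ n * d ^ α := by
          rw [Real.mul_rpow (by positivity) hd0, pow_rpow_comm (by norm_num)]
        calc |φ (shift2^[n] x) - φ (shift2^[n] y)|
            ≤ C * dist2 (shift2^[n] x) (shift2^[n] y) ^ α := hH _ _
          _ ≤ C * (ρ ^ n * d ^ α) := by
              rw [← h2]; exact mul_le_mul_of_nonneg_left h1 hC.le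
          _ = C * ρ ^ n * d ^ α := by ring
      have e2 : |φ (shift2^[n] (star x)) - φ (shift2^[n] (star y))|
          ≤ (4 * C) * ρ ^ n * d ^ α := by
        have hb : dist2 (shift2^[n] (star x)) (shift2^[n] (star y))
            ≤ (2:ℝ) ^ n * (4 * d) := by
          calc dist2 (shift2^[n] (star x)) (shift2^[n] (star y))
              ≤ 2 ^ n * dist2 (star x) (star y) := dist2_iter_le n _ _
            _ ≤ 2 ^ n * (4 * d) := by
                have := dist2_star_le x y
                have h2n : (0:ℝ) < 2 ^ n := by positivity
                nlinarith
        have h1 : dist2 (shift2^[n] (star x)) (shift2^[n] (star y)) ^ α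
            ≤ ((2:ℝ) ^ n * (4 * d)) ^ α :=
          Real.rpow_le_rpow (dist2_nonneg _ _) hb hα1.le
        have h2 : ((2:ℝ) ^ n * (4 * d)) ^ α = ρ ^ n * ((4:ℝ) ^ α * d ^ α) := by
          rw [Real.mul_rpow (by positivity) (by positivity),
            Real.mul_rpow (by norm_num) hd0, pow_rpow_comm (by norm_num)]
        have h3 : (4 : ℝ) ^ α ≤ 4 := by
          have := Real.rpow_le_rpow_of_exponent_le (by norm_num : (1:ℝ) ≤ 4) hα2
          rwa [Real.rpow_one] at this
        have h4 : (0:ℝ) ≤ ρ ^ n := by positivity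
        have h5 : (0:ℝ) ≤ d ^ α := by positivity
        calc |φ (shift2^[n] (star x)) - φ (shift2^[n] (star y))|
            ≤ C * dist2 (shift2^[n] (star x)) (shift2^[n] (star y)) ^ α := hH _ _
          _ ≤ C * (ρ ^ n * ((4:ℝ) ^ α * d ^ α)) := by
              rw [← h2]; exact mul_le_mul_of_nonneg_left h1 hC.le
          _ ≤ (4 * C) * ρ ^ n * d ^ α := by
              nlinarith [mul_le_mul_of_nonneg_left (mul_le_mul_of_nonneg_right h3 h5) (mul_nonneg hC.le h4)]
      calc |FF φ x n - FF φ y n|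
          ≤ |φ (shift2^[n] x) - φ (shift2^[n] y)|
            + |φ (shift2^[n] (star x)) - φ (shift2^[n] (star y))| := by
            rw [hrw]; exact abs_sub _ _
        _ ≤ C * ρ ^ n * d ^ α + (4 * C) * ρ ^ n * d ^ α := add_le_add e1 e2
        _ ≤ (8 * C) * ρ ^ n * d ^ α := by
            have hx3 : 0 ≤ C * ρ ^ n * d ^ α := by
              have hx1 : (0:ℝ) ≤ ρ ^ n := le_of_lt (pow_pos (lt_trans one_pos hρ) n)
              have hx2 : (0:ℝ) ≤ d ^ α := Real.rpow_nonneg hd0 α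
              positivity
            linarith
    have habs : Summable (fun n => |FF φ x n - FF φ y n|) :=
      Summable.of_nonneg_of_le (fun n => abs_nonneg _) hg1 hKgeom
    have hdiff : uu φ x - uu φ y = ∑' n, (FF φ x n - FF φ y n) :=
      (Summable.tsum_sub (FF_summable φ hC hα1 hα2 hH x) (FF_summable φ hC hα1 hα2 hH y)).symm
    have habs'' : |∑' n, (FF φ x n - FF φ y n)| ≤ ∑' n, |FF φ x n - FF φ y n| :=
      norm_tsum_le_tsum_norm (f := fun n => FF φ x n - FF φ y n) habs
    have habs' : |uu φ x - uu φ y| ≤ ∑' n, |FF φ x n - FF φ y n| := by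
      rw [hdiff]; exact habs''
    rcases le_or_gt d 1 with hd1 | hd1
    · -- small distance
      set t : ℝ := d ^ ((1:ℝ)/2) with htdef
      have ht0 : 0 < t := Real.rpow_pos_of_pos hd _
      have ht1 : t ≤ 1 := Real.rpow_le_one hd0 hd1 (by norm_num)
      obtain ⟨M, hM1, hM2⟩ := exists_M ht0 ht1
      have htαd : t ^ α = d ^ (α / 2) := by
        rw [htdef, ← Real.rpow_mul hd0]
        congr 1
        ring
      have key1 : θ ^ M ≤ 2 * d ^ (α / 2) := by
        have h1 : ((1/2:ℝ) ^ M) ^ α ≤ (2 * t) ^ α :=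
          Real.rpow_le_rpow (by positivity) hM1 hα1.le
        rw [pow_rpow_comm (by norm_num)] at h1
        rw [Real.mul_rpow (by norm_num) ht0.le, htαd] at h1
        have h2 : (2:ℝ) ^ α ≤ 2 := by
          have := Real.rpow_le_rpow_of_exponent_le (by norm_num : (1:ℝ) ≤ 2) hα2
          rwa [Real.rpow_one] at this
        have h3 : (0:ℝ) ≤ d ^ (α/2) := by positivity
        calc θ ^ M ≤ (2:ℝ) ^ α * d ^ (α/2) := h1
          _ ≤ 2 * d ^ (α/2) := by nlinarith
      have key2 : d ^ α * ρ ^ M ≤ d ^ (α / 2) := by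
        have h5 : d ^ (α / 2) ≤ θ ^ M := by
          have h1 : t ^ α ≤ ((1/2:ℝ) ^ M) ^ α :=
            Real.rpow_le_rpow ht0.le hM2 hα1.le
          rwa [pow_rpow_comm (by norm_num), htαd] at h1
        have hsplit : d ^ α = d ^ (α/2) * d ^ (α/2) := by
          rw [← Real.rpow_add hd]; norm_num
        have hρθM : ρ ^ M * θ ^ M = 1 := by
          rw [← mul_pow, hρθ, one_pow]
        have h6 : (0:ℝ) ≤ d ^ (α/2) := by positivity
        have h7 : (0:ℝ) ≤ ρ ^ M := by positivity
        calc d ^ α * ρ ^ M = d ^ (α/2) * d ^ (α/2) * ρ ^ M := by rw [hsplit]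
          _ ≤ d ^ (α/2) * θ ^ M * ρ ^ M := by
              nlinarith [mul_le_mul_of_nonneg_right (mul_le_mul_of_nonneg_left h5 h6) h7]
          _ = d ^ (α/2) * (ρ ^ M * θ ^ M) := by ring
          _ = d ^ (α/2) := by rw [hρθM, mul_one]
      -- split the sum at M
      have part1 : ∑ n ∈ Finset.range M, |FF φ x n - FF φ y n|
          ≤ 8 * C * ((2:ℝ) ^ α - 1)⁻¹ * d ^ (α/2) := by
        have h1 : ∑ n ∈ Finset.range M, |FF φ x n - FF φ y n|
            ≤ ∑ n ∈ Finset.range M, (8 * C) * ρ ^ n * d ^ α :=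
          Finset.sum_le_sum (fun n _ => hg2 n)
        have h2 : ∑ n ∈ Finset.range M, (8 * C) * ρ ^ n * d ^ α
            = (8 * C) * d ^ α * ∑ n ∈ Finset.range M, ρ ^ n := by
          rw [Finset.mul_sum]; apply Finset.sum_congr rfl; intro n _; ring
        have h3 : ∑ n ∈ Finset.range M, ρ ^ n = (ρ ^ M - 1) / (ρ - 1) :=
          geom_sum_eq (ne_of_gt hρ) M
        have h4 : (ρ ^ M - 1) / (ρ - 1) ≤ ρ ^ M * (ρ - 1)⁻¹ := by
          rw [div_eq_mul_inv]
          nlinarith only [pow_nonneg (le_of_lt (lt_trans one_pos hρ)) M, hρ1]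
        have h5 : (0:ℝ) ≤ d ^ α := Real.rpow_nonneg hd0 α
        have h6 : (0:ℝ) < (ρ - 1)⁻¹ := hρ1
        calc ∑ n ∈ Finset.range M, |FF φ x n - FF φ y n|
            ≤ (8 * C) * d ^ α * ((ρ ^ M - 1) / (ρ - 1)) := by rw [← h3, ← h2]; exact h1
          _ ≤ (8 * C) * d ^ α * (ρ ^ M * (ρ - 1)⁻¹) := by
              apply mul_le_mul_of_nonneg_left h4 (mul_nonneg hC8 h5)
          _ = (8 * C) * (ρ - 1)⁻¹ * (d ^ α * ρ ^ M) := by ring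
          _ ≤ (8 * C) * (ρ - 1)⁻¹ * d ^ (α/2) := by
              apply mul_le_mul_of_nonneg_left key2 (mul_nonneg hC8 h6.le)
          _ = 8 * C * ((2:ℝ) ^ α - 1)⁻¹ * d ^ (α/2) := by rw [hρdef]
      have part2 : ∑' n : ℕ, |FF φ x (n + M) - FF φ y (n + M)|
          ≤ 16 * C * (1 - θ)⁻¹ * d ^ (α/2) := by
        have hsum2 : Summable (fun n : ℕ => (8 * C) * θ ^ (n + M)) := by
          apply Summable.of_nonneg_of_le
            (fun n => mul_nonneg hC8 (pow_nonneg hθ0.le _)) (fun n => ?_) hKgeom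
          exact mul_le_mul_of_nonneg_left
            (pow_le_pow_of_le_one hθ0.le hθ1.le (Nat.le_add_right n M)) hC8
        have h1 : ∑' n : ℕ, |FF φ x (n + M) - FF φ y (n + M)|
            ≤ ∑' n : ℕ, (8 * C) * θ ^ (n + M) := by
          exact Summable.tsum_le_tsum (f := fun n => |FF φ x (n + M) - FF φ y (n + M)|)
            (g := fun n => (8 * C) * θ ^ (n + M)) (fun n => hg1 (n + M))
            ((summable_nat_add_iff (f := fun n => |FF φ x n - FF φ y n|) M).mpr habs) hsum2
        have h2 : ∑' n : ℕ, (8 * C) * θ ^ (n + M) = (8 * C) * θ ^ M * (1 - θ)⁻¹ := by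
          have : ∀ n : ℕ, (8 * C) * θ ^ (n + M) = ((8 * C) * θ ^ M) * θ ^ n := by
            intro n; rw [pow_add]; ring
          rw [tsum_congr this, tsum_mul_left,
            tsum_geometric_of_lt_one hθ0.le hθ1]
        calc ∑' n : ℕ, |FF φ x (n + M) - FF φ y (n + M)|
            ≤ (8 * C) * θ ^ M * (1 - θ)⁻¹ := by rw [← h2]; exact h1
          _ ≤ (8 * C) * (2 * d ^ (α/2)) * (1 - θ)⁻¹ := by
              apply mul_le_mul_of_nonneg_right _ hθ1'.le
              exact mul_le_mul_of_nonneg_left key1 hC8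
          _ = 16 * C * (1 - θ)⁻¹ * d ^ (α/2) := by ring
      have hthird : 0 ≤ 8 * C * (1 - θ)⁻¹ * d ^ (α/2) :=
        mul_nonneg (mul_nonneg hC8 hθ1'.le) (Real.rpow_nonneg hd0 _)
      calc |uu φ x - uu φ y| ≤ ∑' n, |FF φ x n - FF φ y n| := habs'
        _ = ∑ n ∈ Finset.range M, |FF φ x n - FF φ y n|
            + ∑' n : ℕ, |FF φ x (n + M) - FF φ y (n + M)| :=
            (Summable.sum_add_tsum_nat_add (f := fun n => |FF φ x n - FF φ y n|) M habs).symm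
        _ ≤ 8 * C * ((2:ℝ) ^ α - 1)⁻¹ * d ^ (α/2)
            + 16 * C * (1 - θ)⁻¹ * d ^ (α/2) := add_le_add part1 part2
        _ ≤ Ku C α * d ^ (α/2) := by
            unfold Ku
            rw [← hθdef, ← hρdef]
            linarith only [hthird]
    · -- large distance
      have h1 : 1 ≤ d ^ (α / 2) := by
        apply Real.one_le_rpow hd1.le (by positivity)
      have b1 := uu_bound φ hC hα1 hα2 hH x
      have b2 := uu_bound φ hC hα1 hα2 hH y
      rw [← hθdef] at b1 b2
      have h2 : |uu φ x - uu φ y| ≤ 8 * C * (1 - θ)⁻¹ := by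
        calc |uu φ x - uu φ y| ≤ |uu φ x| + |uu φ y| := abs_sub _ _
          _ ≤ 8 * C * (1 - θ)⁻¹ := by linarith only [b1, b2]
      have h7 : (0:ℝ) ≤ d ^ (α/2) := Real.rpow_nonneg hd0 _
      have h5 : 0 ≤ 8 * C * (ρ - 1)⁻¹ * d ^ (α/2) :=
        mul_nonneg (mul_nonneg hC8 hρ1.le) h7
      have h6 : 0 ≤ 16 * C * (1 - θ)⁻¹ * d ^ (α/2) := by
        have : (0:ℝ) ≤ 16 * C := by linarith
        exact mul_nonneg (mul_nonneg this hθ1'.le) h7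
      calc |uu φ x - uu φ y| ≤ 8 * C * (1 - θ)⁻¹ := h2
        _ ≤ 8 * C * (1 - θ)⁻¹ * d ^ (α/2) :=
            le_mul_of_one_le_right (mul_nonneg hC8 hθ1'.le) h1
        _ ≤ Ku C α * d ^ (α/2) := by
            unfold Ku
            rw [← hθdef, ← hρdef]
            linarith only [h5, h6]

end Holder2
lemma rpow_le_four_mul_rpow_half {d α : ℝ} (hd0 : 0 ≤ d) (hd4 : d ≤ 4)
    (hα1 : 0 < α) (hα2 : α ≤ 1) : d ^ α ≤ 4 * d ^ (α / 2) := by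
  rcases eq_or_lt_of_le hd0 with h0 | h0
  · rw [← h0, Real.zero_rpow (ne_of_gt hα1), Real.zero_rpow (ne_of_gt (half_pos hα1))]
    norm_num
  rcases le_or_gt d 1 with h1 | h1
  · have h2 : d ^ α ≤ d ^ (α / 2) :=
      Real.rpow_le_rpow_of_exponent_ge h0 h1 (by linarith)
    have h3 : (0:ℝ) ≤ d ^ (α / 2) := Real.rpow_nonneg hd0 _
    linarith
  · have e1 : d ^ α ≤ (4:ℝ) ^ α := Real.rpow_le_rpow hd0 hd4 hα1.le
    have e2 : (4:ℝ) ^ α ≤ 4 := by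
      have := Real.rpow_le_rpow_of_exponent_le (by norm_num : (1:ℝ) ≤ 4) hα2
      rwa [Real.rpow_one] at this
    have e3 : 1 ≤ d ^ (α / 2) := Real.one_le_rpow h1.le (by linarith)
    nlinarith

section Forward

variable (φ : TwoSided A → ℝ) {C α : ℝ}
variable (hC : 0 < C) (hα1 : 0 < α) (hα2 : α ≤ 1)
  (hH : ∀ x y : TwoSided A, |φ x - φ y| ≤ C * dist2 x y ^ α)

include hC hα1 hα2 hH in
lemma sum_forward_eq {x y : TwoSided A} (h : ∀ i, 0 ≤ i → x.1 i = y.1 i) :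
    uu φ x - uu φ y = ∑' n : ℕ, (φ (shift2^[n] x) - φ (shift2^[n] y)) := by
  have hsx : star x = star y := star_eq_of_forward h
  have hFdiff : ∀ n, FF φ x n - FF φ y n = φ (shift2^[n] x) - φ (shift2^[n] y) := by
    intro n; unfold FF; rw [hsx]; ring
  rw [uu, uu, ← Summable.tsum_sub (f := FF φ x) (g := FF φ y)
    (FF_summable φ hC hα1 hα2 hH x) (FF_summable φ hC hα1 hα2 hH y)]
  exact tsum_congr hFdiff

include hC hα1 hα2 hH in
lemma phip_forward {x y : TwoSided A} (h : ∀ i, 0 ≤ i → x.1 i = y.1 i) :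
    φ x + uu φ (shift2 x) - uu φ x = φ y + uu φ (shift2 y) - uu φ y := by
  set g : ℕ → ℝ := fun n => φ (shift2^[n] x) - φ (shift2^[n] y) with hgdef
  have hgb : ∀ n, |g n| ≤ (4 * C) * ((1 / 2 : ℝ) ^ α) ^ n :=
    holder_forward_bound φ hC hα1 hα2 hH h
  have hgsum : Summable g := by
    apply Summable.of_norm_bounded ((summable_geometric_of_lt_one (theta_pos).le
      (theta_lt_one hα1)).mul_left (4 * C)) hgb
  have hux : uu φ x - uu φ y = ∑' n, g n := sum_forward_eq φ hC hα1 hα2 hH h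
  have h' : ∀ i, 0 ≤ i → (shift2 x).1 i = (shift2 y).1 i := by
    intro i hi
    exact h (i + 1) (by omega)
  have hux' : uu φ (shift2 x) - uu φ (shift2 y)
      = ∑' n : ℕ, (φ (shift2^[n] (shift2 x)) - φ (shift2^[n] (shift2 y))) :=
    sum_forward_eq φ hC hα1 hα2 hH h'
  have hshiftterm : ∀ n : ℕ, φ (shift2^[n] (shift2 x)) - φ (shift2^[n] (shift2 y))
      = g (n + 1) := by
    intro n
    rw [hgdef]
    rw [← Function.iterate_succ_apply, ← Function.iterate_succ_apply]
  have hux'2 : uu φ (shift2 x) - uu φ (shift2 y) = ∑' n : ℕ, g (n + 1) := by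
    rw [hux']; exact tsum_congr hshiftterm
  have hzero : ∑' n, g n = g 0 + ∑' n, g (n + 1) := Summable.tsum_eq_zero_add hgsum
  have hg0 : g 0 = φ x - φ y := by rw [hgdef]; simp
  rw [hg0] at hzero
  linarith [hux, hux'2, hzero]

end Forward

end SinaiAux

open SinaiAux

/-- (Sinai–Bowen) A Hölder function `φ` on the two-sided subshift is
cohomologous, via a Hölder transfer function `u`, to a Hölder function `φ⁺`
depending only on the forward coordinates. -/
theorem holder_cohomologous_to_forward_dependent
    {A : Fin r → Fin r → Prop} (φ : TwoSided A → ℝ)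
    (hφ : IsHolderWrt dist2 φ) :
    ∃ u φp : TwoSided A → ℝ,
      IsHolderWrt dist2 u ∧ IsHolderWrt dist2 φp ∧
      (∀ x, φp x = φ x + u (shift2 x) - u x) ∧
      (∀ x y : TwoSided A, (∀ i : ℤ, 0 ≤ i → x.1 i = y.1 i) → φp x = φp y) := by
  obtain ⟨C, hC, α, hα, hH⟩ := hφ
  have hα1 : 0 < α := hα.1
  have hα2 : α ≤ 1 := hα.2
  have hKu := Ku_pos (α := α) hC hα1
  refine ⟨uu φ, fun x => φ x + uu φ (shift2 x) - uu φ x, ?_, ?_, fun x => rfl, ?_⟩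
  · exact ⟨Ku C α, hKu, α / 2, ⟨half_pos hα1, by linarith⟩, uu_holder φ hC hα1 hα2 hH⟩
  · refine ⟨4 * C + 3 * Ku C α, by linarith, α / 2, ⟨half_pos hα1, by linarith⟩, ?_⟩
    intro x y
    have hd0 : 0 ≤ dist2 x y := dist2_nonneg x y
    have hd2 : 0 ≤ dist2 x y ^ (α / 2) := Real.rpow_nonneg hd0 _
    have h1 : |φ x - φ y| ≤ C * (4 * dist2 x y ^ (α / 2)) := by
      calc |φ x - φ y| ≤ C * dist2 x y ^ α := hH x y
        _ ≤ C * (4 * dist2 x y ^ (α / 2)) :=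
          mul_le_mul_of_nonneg_left
            (rpow_le_four_mul_rpow_half hd0 (dist2_le_four x y) hα1 hα2) hC.le
    have h3 : |uu φ x - uu φ y| ≤ Ku C α * dist2 x y ^ (α / 2) :=
      uu_holder φ hC hα1 hα2 hH x y
    have h2 : |uu φ (shift2 x) - uu φ (shift2 y)|
        ≤ Ku C α * (2 * dist2 x y ^ (α / 2)) := by
      have e0 := uu_holder φ hC hα1 hα2 hH (shift2 x) (shift2 y)
      have e1 : dist2 (shift2 x) (shift2 y) ^ (α / 2)
          ≤ (2 * dist2 x y) ^ (α / 2) :=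
        Real.rpow_le_rpow (dist2_nonneg _ _) (dist2_shift_le x y) (by linarith)
      have e2 : ((2 : ℝ) * dist2 x y) ^ (α / 2)
          = (2 : ℝ) ^ (α / 2) * dist2 x y ^ (α / 2) :=
        Real.mul_rpow (by norm_num) hd0
      have e3 : (2 : ℝ) ^ (α / 2) ≤ 2 := by
        have := Real.rpow_le_rpow_of_exponent_le (by norm_num : (1:ℝ) ≤ 2)
          (by linarith : α / 2 ≤ 1)
        rwa [Real.rpow_one] at this
      have e4 : dist2 (shift2 x) (shift2 y) ^ (α / 2)
          ≤ 2 * dist2 x y ^ (α / 2) := by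
        rw [e2] at e1
        nlinarith [mul_le_mul_of_nonneg_right e3 hd2]
      calc |uu φ (shift2 x) - uu φ (shift2 y)|
          ≤ Ku C α * dist2 (shift2 x) (shift2 y) ^ (α / 2) := e0
        _ ≤ Ku C α * (2 * dist2 x y ^ (α / 2)) :=
          mul_le_mul_of_nonneg_left e4 hKu.le
    have hrw : φ x + uu φ (shift2 x) - uu φ x - (φ y + uu φ (shift2 y) - uu φ y)
        = (φ x - φ y) + ((uu φ (shift2 x) - uu φ (shift2 y)) - (uu φ x - uu φ y)) := by
      ring
    calc |φ x + uu φ (shift2 x) - uu φ x - (φ y + uu φ (shift2 y) - uu φ y)|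
        = |(φ x - φ y) + ((uu φ (shift2 x) - uu φ (shift2 y)) - (uu φ x - uu φ y))| := by
          rw [hrw]
      _ ≤ |φ x - φ y| + |(uu φ (shift2 x) - uu φ (shift2 y)) - (uu φ x - uu φ y)| :=
          abs_add_le _ _
      _ ≤ |φ x - φ y| + (|uu φ (shift2 x) - uu φ (shift2 y)| + |uu φ x - uu φ y|) := by
          have := abs_sub (uu φ (shift2 x) - uu φ (shift2 y)) (uu φ x - uu φ y)
          linarith
      _ ≤ (4 * C + 3 * Ku C α) * dist2 x y ^ (α / 2) := by nlinarith [h1, h2, h3]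
  · intro x y h
    exact phip_forward φ hC hα1 hα2 hH h
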